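/- Let x be a nonempty finite word and let w = x^ω be the periodic infinite word with period x. If w has palindromic prefixes of arbitrarily large length, then there exist palindromes u and v (possibly empty) such that x = uv. -/

import Mathlib

/-- The prefix of length `n` of `w` is a palindrome. -/
def PalindromicPrefix {A : Type*} (w : ℕ → A) (n : ℕ) : Prop :=
  ∀ i < n, w i = w (n - 1 - i)

theorem periodic_word_with_palindromic_prefixes {A : Type*} (x : List A) (hx : x ≠ [])
    (w : ℕ → A)
    (hw : ∀ n : ℕ, w n = x.get ⟨n % x.length, Nat.mod_lt n (List.length_pos_iff.mpr hx)⟩)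
    (hpal : ∀ M : ℕ, ∃ n > M, PalindromicPrefix w n) :
    ∃ u v : List A, u.Palindrome ∧ v.Palindrome ∧ x = u ++ v := by
  have hp0 : 0 < x.length := List.length_pos_iff.mpr hx
  set p := x.length with hp
  obtain ⟨n, hn, hpaln⟩ := hpal p
  have key : ∀ j, (hj : j < p) → x[j]'hj = x[(n - 1 - j) % p]'(Nat.mod_lt _ hp0) := by
    intro j hj
    have h1 := hpaln j (by omega)
    rw [hw, hw] at h1
    simp only [List.get_eq_getElem] at h1
    simp only [Nat.mod_eq_of_lt (show j < x.length from hj)] at h1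
    exact h1
  set r := (n - 1) % p with hrdef
  have hr : r < p := Nat.mod_lt _ hp0
  obtain ⟨q, hq⟩ : ∃ q, n - 1 = q * p + r := ⟨(n - 1) / p, (Nat.div_add_mod' (n - 1) p).symm⟩
  have hq1 : 1 ≤ q := by
    by_contra h
    have hq0 : q = 0 := by omega
    rw [hq0, Nat.zero_mul, Nat.zero_add] at hq
    omega
  obtain ⟨q', rfl⟩ : ∃ q', q = q' + 1 := ⟨q - 1, by omega⟩
  rw [Nat.add_mul, Nat.one_mul] at hq
  have fact1 : ∀ k, (hk : k ≤ r) → x[k]'(by omega) = x[r - k]'(by omega) := by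
    intro k hk
    have e1 : n - 1 - k = q' * p + p + (r - k) := by
      set Q := q' * p with hQ
      omega
    have e2 : (n - 1 - k) % p = r - k := by
      rw [e1, Nat.add_assoc, Nat.add_comm, Nat.add_mul_mod_self_right,
        Nat.add_mod_left, Nat.mod_eq_of_lt (by omega)]
    have := key k (by omega)
    simp only [e2] at this
    exact this
  have fact2 : ∀ k, (hk : k < p - r - 1) →
      x[r + 1 + k]'(by omega) = x[p - 1 - k]'(by omega) := by
    intro k hk
    have e1 : n - 1 - (r + 1 + k) = q' * p + (p - 1 - k) := by
      set Q := q' * p with hQ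
      omega
    have e2 : (n - 1 - (r + 1 + k)) % p = p - 1 - k := by
      rw [e1, Nat.add_comm, Nat.add_mul_mod_self_right, Nat.mod_eq_of_lt (by omega)]
    have := key (r + 1 + k) (by omega)
    simp only [e2] at this
    exact this
  refine ⟨x.take (r + 1), x.drop (r + 1), ?_, ?_, (List.take_append_drop _ _).symm⟩
  · apply List.Palindrome.of_reverse_eq
    apply List.ext_getElem
    · simp
    · intro i h1 h2
      have hlen : (x.take (r + 1)).length = r + 1 := by
        simp [Nat.min_eq_left (show r + 1 ≤ p by omega)]
        omega
      have hi : i ≤ r := by rw [hlen] at h2; omega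
      rw [List.getElem_reverse, List.getElem_take, List.getElem_take]
      simp only [hlen]
      convert (fact1 i hi).symm using 2
      all_goals omega
  · apply List.Palindrome.of_reverse_eq
    apply List.ext_getElem
    · simp
    · intro i h1 h2
      have hlen : (x.drop (r + 1)).length = p - r - 1 := by simp; omega
      have hi : i < p - r - 1 := by rw [hlen] at h2; omega
      rw [List.getElem_reverse, List.getElem_drop, List.getElem_drop]
      simp only [hlen]
      convert fact2 (p - r - 2 - i) (by omega) using 2
      all_goals omega
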